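/- arXiv:1204.5922 — 5 statements merged into one kernel-verified Lean document; each statement's English description precedes it below -/
import Mathlib

section
/- Let (G, ≤) be a lefthanded graph. For every vertex v, the set μ(D_v) together with the disjoint union over u ∈ N_v of μ(D_u) equals the disjoint union of N_v and μ(F_v). That is, μ(D_v) ∪ (⋃_{u∈N_v} μ(D_u)) = N_v ∪ μ(F_v), and all unions involved are disjoint. -/
open scoped Classical

/-- A tree order: whenever `w < u` and `w < v`, the elements `u` and `v` are comparable. -/
def TreeOrder (V : Type*) [PartialOrder V] : Prop :=
  ∀ w u v : V, w < u → w < v → (u ≤ v ∨ v ≤ u)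

/-- A lefthanded graph with respect to the partial order on `V`. -/
def Lefthanded {V : Type*} [PartialOrder V] (G : SimpleGraph V) : Prop :=
  TreeOrder V ∧
  (∀ u v : V, G.Adj u v → u ≤ v ∨ v ≤ u) ∧
  (∀ w u v : V, w < u → u < v → G.Adj v w → G.Adj v u)

/-- `D_v = {u : u < v}`. -/
noncomputable def Dset {V : Type*} [Fintype V] [PartialOrder V] (v : V) : Finset V :=
  Finset.univ.filter (fun u => u < v)

/-- `D̄_v = D_v ∪ {v}`. -/
noncomputable def Dbar {V : Type*} [Fintype V] [DecidableEq V] [PartialOrder V] (v : V) :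
    Finset V :=
  insert v (Dset v)

/-- `N_v = {u < v : u ~ v}`. -/
noncomputable def Nset {V : Type*} [Fintype V] [PartialOrder V] (G : SimpleGraph V) (v : V) :
    Finset V :=
  Finset.univ.filter (fun u => u < v ∧ G.Adj u v)

/-- `F_v = D_v \ N_v`. -/
noncomputable def Fset {V : Type*} [Fintype V] [DecidableEq V] [PartialOrder V]
    (G : SimpleGraph V) (v : V) : Finset V :=
  Dset v \ Nset G v

/-- `μ(U)`: the set of maximal elements of `U`. -/
noncomputable def maxElts {V : Type*} [PartialOrder V] (U : Finset V) : Finset V :=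
  U.filter (fun u => ∀ w ∈ U, ¬ u < w)

/-- `I` is an independent set of `G`. -/
def IndepSet {V : Type*} (G : SimpleGraph V) (I : Finset V) : Prop :=
  ∀ u ∈ I, ∀ w ∈ I, ¬ G.Adj u w

/-- `B(S) = Σ_{I ⊆ S, I independent} (−1)^{|I|} Π_{v∈I} p_v`. -/
noncomputable def Bfun {V : Type*} [Fintype V] (G : SimpleGraph V) (p : V → ℝ) (S : Finset V) :
    ℝ :=
  ∑ I ∈ S.powerset.filter (fun I => IndepSet G I), (-1 : ℝ) ^ I.card * ∏ v ∈ I, p v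

/-- `𝔮(S) = Σ_{I ⊇ S, I independent} (−1)^{|I|−|S|} Π_{v∈I} p_v`. -/
noncomputable def qfun {V : Type*} [Fintype V] (G : SimpleGraph V) (p : V → ℝ) (S : Finset V) :
    ℝ :=
  ∑ I ∈ Finset.univ.powerset.filter (fun I => IndepSet G I ∧ S ⊆ I),
    (-1 : ℝ) ^ (I.card - S.card) * ∏ v ∈ I, p v

/-- A down-closed set. -/
def DownClosed {V : Type*} [Fintype V] [PartialOrder V] (S : Finset V) : Prop :=
  ∀ s ∈ S, Dset s ⊆ S

lemma mem_Dset {V : Type*} [Fintype V] [PartialOrder V] {u v : V} :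
    u ∈ Dset v ↔ u < v := by simp [Dset]

lemma mem_Nset {V : Type*} [Fintype V] [PartialOrder V] {G : SimpleGraph V} {u v : V} :
    u ∈ Nset G v ↔ u < v ∧ G.Adj u v := by simp [Nset]

lemma mem_Fset {V : Type*} [Fintype V] [DecidableEq V] [PartialOrder V] {G : SimpleGraph V}
    {u v : V} : u ∈ Fset G v ↔ u < v ∧ ¬ G.Adj u v := by
  simp only [Fset, Finset.mem_sdiff, mem_Dset, mem_Nset]
  tauto

lemma mem_maxElts {V : Type*} [PartialOrder V] {U : Finset V} {u : V} :
    u ∈ maxElts U ↔ u ∈ U ∧ ∀ w ∈ U, ¬ u < w := by simp [maxElts]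

theorem stmt1 {V : Type*} [Fintype V] [DecidableEq V] [PartialOrder V]
    (G : SimpleGraph V) (hG : Lefthanded G) (v : V) :
    (maxElts (Dset v) ∪ (Nset G v).biUnion (fun u => maxElts (Dset u))
        = Nset G v ∪ maxElts (Fset G v)) ∧
    (∀ u ∈ Nset G v, Disjoint (maxElts (Dset v)) (maxElts (Dset u))) ∧
    (∀ u ∈ Nset G v, ∀ u' ∈ Nset G v, u ≠ u' →
        Disjoint (maxElts (Dset u)) (maxElts (Dset u'))) ∧
    Disjoint (Nset G v) (maxElts (Fset G v)) := by
  obtain ⟨htree, hcomp, hleft⟩ := hG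
  refine ⟨?_, ?_, ?_, ?_⟩
  · ext x
    simp only [Finset.mem_union, Finset.mem_biUnion, mem_maxElts, mem_Dset, mem_Nset, mem_Fset]
    constructor
    · rintro (⟨hxv, hmax⟩ | ⟨u, ⟨huv, hadj⟩, hxu, hmax⟩)
      · by_cases hxa : G.Adj x v
        · exact Or.inl ⟨hxv, hxa⟩
        · exact Or.inr ⟨⟨hxv, hxa⟩, fun w hw => hmax w hw.1⟩
      · by_cases hxa : G.Adj x v
        · exact Or.inl ⟨hxu.trans huv, hxa⟩
        · refine Or.inr ⟨⟨hxu.trans huv, hxa⟩, fun w ⟨hwv, hwa⟩ hxw => ?_⟩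
          rcases htree x w u hxw hxu with h | h
          · rcases lt_or_eq_of_le h with h | h
            · exact hmax w h hxw
            · exact hwa (h ▸ hadj)
          · rcases lt_or_eq_of_le h with h | h
            · exact hwa ((hleft u w v h hwv hadj.symm).symm)
            · exact hwa (h ▸ hadj)
    · -- reverse inclusion
      have key : ∀ x, x < v →
          ((∀ w, w < v → ¬ x < w) ∨ ∃ u, u < v ∧ x < u ∧ ∀ w, w < u → ¬ x < w) := by
        intro x hxv
        by_cases hm : ∀ w, w < v → ¬ x < w
        · exact Or.inl hm
        · push_neg at hm
          obtain ⟨y, hyv, hxy⟩ := hm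
          set C := Finset.univ.filter (fun y => x < y ∧ y < v) with hC
          have hCne : C.Nonempty := ⟨y, by simp [hC, hxy, hyv]⟩
          obtain ⟨u, hu⟩ := Finset.exists_minimal hCne
          have huC : u ∈ C := hu.1
          have humin : ∀ w ∈ C, ¬ w < u := fun w hw => hu.not_lt hw
          simp only [hC, Finset.mem_filter, Finset.mem_univ, true_and] at huC
          right
          refine ⟨u, huC.2, huC.1, fun w hwu hxw => ?_⟩
          exact humin w (by simp [hC, hxw, hwu.trans huC.2]) hwu
      rintro (⟨hxv, hxa⟩ | ⟨⟨hxv, hxa⟩, hmax⟩)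
      · rcases key x hxv with h | ⟨u, huv, hxu, h⟩
        · exact Or.inl ⟨hxv, h⟩
        · have hadj : G.Adj u v := (hleft x u v hxu huv hxa.symm).symm
          exact Or.inr ⟨u, ⟨huv, hadj⟩, hxu, h⟩
      · rcases key x hxv with h | ⟨u, huv, hxu, h⟩
        · exact Or.inl ⟨hxv, h⟩
        · have hadj : G.Adj u v := by
            by_contra hnadj
            exact hmax u ⟨huv, hnadj⟩ hxu
          exact Or.inr ⟨u, ⟨huv, hadj⟩, hxu, h⟩
  · intro u hu
    simp only [mem_Nset] at hu
    rw [Finset.disjoint_left]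
    intro x hx hx'
    rw [mem_maxElts] at hx hx'
    exact hx.2 u (mem_Dset.mpr hu.1) (mem_Dset.mp hx'.1)
  · intro u hu u' hu' hne
    simp only [mem_Nset] at hu hu'
    rw [Finset.disjoint_left]
    intro x hx hx'
    rw [mem_maxElts] at hx hx'
    rcases htree x u u' (mem_Dset.mp hx.1) (mem_Dset.mp hx'.1) with h | h
    · exact hx'.2 u (mem_Dset.mpr (lt_of_le_of_ne h hne)) (mem_Dset.mp hx.1)
    · exact hx.2 u' (mem_Dset.mpr (lt_of_le_of_ne h hne.symm)) (mem_Dset.mp hx'.1)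
  · rw [Finset.disjoint_left]
    intro x hx hx'
    rw [mem_Nset] at hx
    rw [mem_maxElts, mem_Fset] at hx'
    exact hx'.1.2 hx.2
end

section
/- Let G be a finite graph labeled with p_v ∈ [0,1]. With 𝔮(S) = Σ_{I ⊇ S, I independent} (−1)^{|I|−|S|} Π_{v∈I} p_v and B(S) = Σ_{I ⊆ S, I independent} (−1)^{|I|} Π_{v∈I} p_v, for every S ⊆ V one has B(S) = Σ_{R ⊆ V∖S} 𝔮(R). -/
open scoped Classical

lemma real_alt_sum {α : Type*} [DecidableEq α] (x : Finset α) :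
    (∑ m ∈ x.powerset, (-1 : ℝ) ^ m.card) = if x = ∅ then 1 else 0 := by
  have h := Finset.sum_powerset_neg_one_pow_card (x := x)
  exact_mod_cast congrArg (fun z : ℤ => (z : ℝ)) h

lemma neg_one_sub_pow {a b : ℕ} (h : b ≤ a) : (-1 : ℝ) ^ (a - b) = (-1) ^ a * (-1) ^ b := by
  have hab : a + b = (a - b) + 2 * b := by omega
  rw [← pow_add, hab, pow_add, pow_mul]
  simp

theorem stmt5 {V : Type*} [Fintype V] [DecidableEq V] (G : SimpleGraph V) (p : V → ℝ)
    (hp : ∀ v, 0 ≤ p v ∧ p v ≤ 1) (S : Finset V) :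
    Bfun G p S = ∑ R ∈ ((Finset.univ : Finset V) \ S).powerset, qfun G p R := by
  classical
  have step1 : ∑ R ∈ ((Finset.univ : Finset V) \ S).powerset, qfun G p R
      = ∑ I ∈ (Finset.univ : Finset V).powerset,
          ∑ R ∈ ((Finset.univ : Finset V) \ S).powerset,
            (if IndepSet G I ∧ R ⊆ I then (-1:ℝ)^(I.card - R.card) * ∏ v ∈ I, p v else 0) := by
    rw [Finset.sum_comm]
    exact Finset.sum_congr rfl fun R _ => by rw [qfun, Finset.sum_filter]; exact Finset.sum_congr rfl fun I _ => by split_ifs <;> rfl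
  have step2 : ∀ I ∈ (Finset.univ : Finset V).powerset,
      (∑ R ∈ ((Finset.univ : Finset V) \ S).powerset,
        (if IndepSet G I ∧ R ⊆ I then (-1:ℝ)^(I.card - R.card) * ∏ v ∈ I, p v else 0))
      = if IndepSet G I ∧ I ⊆ S then (-1:ℝ)^I.card * ∏ v ∈ I, p v else 0 := by
    intro I _
    by_cases hI : IndepSet G I
    · simp only [hI, true_and]
      have hset : ((Finset.univ : Finset V) \ S).powerset.filter (fun R => R ⊆ I)
          = (I \ S).powerset := by
        ext R
        simp only [Finset.mem_powerset, Finset.mem_filter, Finset.subset_sdiff,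
          Finset.subset_univ, true_and]
        tauto
      rw [← Finset.sum_filter, hset]
      have hterm : ∀ R ∈ (I \ S).powerset, (-1:ℝ)^(I.card - R.card) * ∏ v ∈ I, p v
          = ((-1:ℝ)^I.card * ∏ v ∈ I, p v) * (-1:ℝ)^R.card := by
        intro R hR
        have hRI : R ⊆ I := (Finset.mem_powerset.mp hR).trans Finset.sdiff_subset
        rw [neg_one_sub_pow (Finset.card_le_card hRI)]; ring
      rw [Finset.sum_congr rfl hterm, ← Finset.mul_sum, real_alt_sum]
      simp only [Finset.sdiff_eq_empty_iff_subset]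
      split_ifs with h
      · ring
      · ring
    · simp [hI]
  rw [step1, Finset.sum_congr rfl step2, Bfun]
  have hfil : S.powerset.filter (fun I => IndepSet G I)
      = (Finset.univ : Finset V).powerset.filter (fun I => IndepSet G I ∧ I ⊆ S) := by
    ext I
    simp only [Finset.mem_filter, Finset.mem_powerset, Finset.subset_univ, true_and]
    tauto
  rw [hfil, Finset.sum_filter]
end

section
/- Let (G, ≤) be a lefthanded graph with labels p_v ∈ [0,1]. For every vertex v, B(D_v) − p_v · B(F_v) = B(D̄_v). Consequently, if 𝔮(S) ≥ 0 for all S ⊆ V, then B(D_v) ≥ p_v · B(F_v). -/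
open scoped Classical

open Finset in
lemma neg_one_pow_sum_powerset_aux {α : Type*} [DecidableEq α] (A : Finset α) :
    (∑ J ∈ A.powerset, (-1 : ℝ) ^ J.card) = if A = ∅ then 1 else 0 := by
  have h := @Finset.sum_powerset_neg_one_pow_card α _ A
  have h2 : ((∑ J ∈ A.powerset, (-1 : ℤ) ^ J.card : ℤ) : ℝ)
      = ∑ J ∈ A.powerset, (-1 : ℝ) ^ J.card := by push_cast; ring_nf
  rw [← h2, h]
  split <;> norm_num

open Finset in
lemma Bfun_eq_sum_qfun {V : Type*} [Fintype V] [DecidableEq V] (G : SimpleGraph V)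
    (p : V → ℝ) (S : Finset V) :
    Bfun G p S = ∑ J ∈ Sᶜ.powerset, qfun G p J := by
  unfold Bfun qfun
  have hfil : S.powerset.filter (fun I => IndepSet G I)
      = Finset.univ.powerset.filter (fun I => I ⊆ S ∧ IndepSet G I) := by
    ext I
    simp only [Finset.mem_filter, Finset.mem_powerset, Finset.mem_univ, Finset.subset_univ,
      true_and, and_comm]
  rw [hfil, Finset.sum_filter]
  simp only [Finset.sum_filter]
  rw [Finset.sum_comm]
  apply Finset.sum_congr rfl
  intro I _
  by_cases hInd : IndepSet G I
  · simp only [hInd, true_and, and_true]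
    have hfil2 : Sᶜ.powerset.filter (fun J => J ⊆ I) = (Sᶜ ∩ I).powerset := by
      ext J
      simp only [Finset.mem_filter, Finset.mem_powerset, Finset.subset_inter_iff]
    have hsum : ∑ J ∈ Sᶜ.powerset, (if J ⊆ I then
        (-1 : ℝ) ^ (I.card - J.card) * ∏ v ∈ I, p v else 0)
        = ∑ J ∈ (Sᶜ ∩ I).powerset, (-1 : ℝ) ^ (I.card - J.card) * ∏ v ∈ I, p v := by
      rw [← Finset.sum_filter, hfil2]
    rw [hsum]
    have hterm : ∀ J ∈ (Sᶜ ∩ I).powerset,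
        (-1 : ℝ) ^ (I.card - J.card) * ∏ v ∈ I, p v
        = ((-1 : ℝ) ^ I.card * ∏ v ∈ I, p v) * (-1 : ℝ) ^ J.card := by
      intro J hJ
      have hJI : J ⊆ I := (Finset.mem_powerset.1 hJ).trans Finset.inter_subset_right
      have hk : J.card ≤ I.card := Finset.card_le_card hJI
      have hpow : (-1 : ℝ) ^ (I.card - J.card) = (-1 : ℝ) ^ I.card * (-1 : ℝ) ^ J.card := by
        have h2 : I.card + J.card = (I.card - J.card) + 2 * J.card := by omega
        rw [← pow_add, h2, pow_add, pow_mul]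
        norm_num
      rw [hpow]; ring
    rw [Finset.sum_congr rfl hterm, ← Finset.mul_sum, neg_one_pow_sum_powerset_aux]
    have hempty : (Sᶜ ∩ I = ∅) ↔ I ⊆ S := by
      constructor
      · intro h x hx
        by_contra hxS
        have : x ∈ Sᶜ ∩ I := Finset.mem_inter.2 ⟨Finset.mem_compl.2 hxS, hx⟩
        rw [h] at this
        exact absurd this (Finset.notMem_empty x)
      · intro h
        ext x
        simp only [Finset.mem_inter, Finset.mem_compl, Finset.notMem_empty, iff_false]
        rintro ⟨hxS, hxI⟩
        exact hxS (h hxI)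
    by_cases hIS : I ⊆ S
    · simp [hempty.2 hIS, hIS]
    · rw [if_neg (fun h => hIS (hempty.1 h)), if_neg hIS]
      ring
  · simp [hInd]

open Finset in
lemma indepSet_insert_iff {V : Type*} [Fintype V] [DecidableEq V] [PartialOrder V]
    (G : SimpleGraph V) (v : V) (I : Finset V) (hI : I ⊆ Dset v) :
    IndepSet G (insert v I) ↔ IndepSet G I ∧ I ⊆ Fset G v := by
  have hlt : ∀ u ∈ I, u < v := by
    intro u hu
    have := hI hu
    simpa [Dset] using this
  constructor
  · intro h
    refine ⟨fun u hu w hw => h u (Finset.mem_insert_of_mem hu) w (Finset.mem_insert_of_mem hw), ?_⟩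
    intro u hu
    simp only [Fset, Nset, Dset, Finset.mem_sdiff, Finset.mem_filter, Finset.mem_univ, true_and]
    refine ⟨hlt u hu, ?_⟩
    rintro ⟨-, hadj⟩
    exact h u (Finset.mem_insert_of_mem hu) v (Finset.mem_insert_self _ _) hadj
  · rintro ⟨h1, h2⟩ u hu w hw
    have hF : ∀ x ∈ I, ¬ G.Adj x v := by
      intro x hx hadj
      have := h2 hx
      simp only [Fset, Nset, Dset, Finset.mem_sdiff, Finset.mem_filter, Finset.mem_univ,
        true_and] at this
      exact this.2 ⟨hlt x hx, hadj⟩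
    rcases Finset.mem_insert.1 hu with hu' | hu'
    · subst hu'
      rcases Finset.mem_insert.1 hw with hw' | hw'
      · subst hw'; exact G.irrefl
      · exact fun hadj => hF w hw' hadj.symm
    · rcases Finset.mem_insert.1 hw with hw' | hw'
      · subst hw'
        exact hF u hu'
      · exact h1 u hu' w hw'

open Finset in
lemma Bfun_Dbar_eq {V : Type*} [Fintype V] [DecidableEq V] [PartialOrder V]
    (G : SimpleGraph V) (p : V → ℝ) (v : V) :
    Bfun G p (Dbar v) = Bfun G p (Dset v) - p v * Bfun G p (Fset G v) := by
  have hv : v ∉ Dset v := by simp [Dset]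
  unfold Bfun Dbar
  rw [Finset.sum_filter, Finset.sum_powerset_insert hv]
  have h1 : ∑ I ∈ (Dset v).powerset,
      (if IndepSet G I then (-1 : ℝ) ^ I.card * ∏ u ∈ I, p u else 0)
      = ∑ I ∈ (Dset v).powerset.filter (fun I => IndepSet G I),
        (-1 : ℝ) ^ I.card * ∏ u ∈ I, p u := (Finset.sum_filter _ _).symm
  have h2 : ∑ I ∈ (Dset v).powerset,
      (if IndepSet G (insert v I) then
        (-1 : ℝ) ^ (insert v I).card * ∏ u ∈ insert v I, p u else 0)
      = - (p v * ∑ I ∈ (Fset G v).powerset.filter (fun I => IndepSet G I),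
        (-1 : ℝ) ^ I.card * ∏ u ∈ I, p u) := by
    have step : ∀ I ∈ (Dset v).powerset,
        (if IndepSet G (insert v I) then
          (-1 : ℝ) ^ (insert v I).card * ∏ u ∈ insert v I, p u else 0)
        = -(p v) * (if IndepSet G I ∧ I ⊆ Fset G v then
            (-1 : ℝ) ^ I.card * ∏ u ∈ I, p u else 0) := by
      intro I hI
      have hIsub : I ⊆ Dset v := Finset.mem_powerset.1 hI
      have hvI : v ∉ I := fun h => hv (hIsub h)
      rw [Finset.card_insert_of_notMem hvI, Finset.prod_insert hvI]
      by_cases h : IndepSet G (insert v I)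
      · rw [if_pos h, if_pos ((indepSet_insert_iff G v I hIsub).1 h)]
        rw [pow_succ]
        ring
      · rw [if_neg h, if_neg (fun hc => h ((indepSet_insert_iff G v I hIsub).2 hc))]
        ring
    rw [Finset.sum_congr rfl step, ← Finset.mul_sum]
    have hFD : Fset G v ⊆ Dset v := Finset.sdiff_subset
    have hfil : (Dset v).powerset.filter (fun I => IndepSet G I ∧ I ⊆ Fset G v)
        = (Fset G v).powerset.filter (fun I => IndepSet G I) := by
      ext I
      simp only [Finset.mem_filter, Finset.mem_powerset]
      constructor
      · rintro ⟨-, h1, h2⟩; exact ⟨h2, h1⟩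
      · rintro ⟨h1, h2⟩; exact ⟨h1.trans hFD, h2, h1⟩
    rw [← Finset.sum_filter, hfil]
    ring
  rw [h1, h2]
  ring

theorem stmt7 {V : Type*} [Fintype V] [DecidableEq V] [PartialOrder V]
    (G : SimpleGraph V) (p : V → ℝ) (hp : ∀ v, 0 ≤ p v ∧ p v ≤ 1)
    (hG : Lefthanded G) (v : V) :
    Bfun G p (Dset v) - p v * Bfun G p (Fset G v) = Bfun G p (Dbar v) ∧
    ((∀ S : Finset V, 0 ≤ qfun G p S) →
      p v * Bfun G p (Fset G v) ≤ Bfun G p (Dset v)) := by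
  have heq := Bfun_Dbar_eq G p v
  refine ⟨heq.symm, fun hq => ?_⟩
  have hnonneg : 0 ≤ Bfun G p (Dbar v) := by
    rw [Bfun_eq_sum_qfun]
    exact Finset.sum_nonneg fun J _ => hq J
  linarith
end

section
/- Let (G, ≤) be a lefthanded graph with labels p_v ∈ [0,1] such that B(S) > 0 for all S ⊆ V, and set x_v = p_v · B(F_v) / B(D_v). Then Π_{v ∈ V} (1 − x_v) = B(V). -/
open scoped Classical

section Stmt9Aux

variable {V : Type*} [Fintype V] [DecidableEq V] [PartialOrder V]

lemma B_empty (G : SimpleGraph V) (p : V → ℝ) : Bfun G p ∅ = 1 := by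
  rw [Bfun, Finset.powerset_empty, Finset.filter_singleton, if_pos]
  · simp
  · intro u hu; simp at hu

lemma B_eq_sum_ite (G : SimpleGraph V) (p : V → ℝ) (S : Finset V) :
    Bfun G p S
      = ∑ I ∈ S.powerset, (if IndepSet G I then (-1:ℝ)^I.card * ∏ v ∈ I, p v else 0) := by
  rw [Bfun, Finset.sum_filter]

lemma indep_insert_iff (G : SimpleGraph V) {m : V} {I : Finset V} (hm : m ∉ I) :
    IndepSet G (insert m I) ↔ IndepSet G I ∧ ∀ u ∈ I, ¬ G.Adj u m := by
  constructor
  · intro h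
    refine ⟨fun u hu w hw => h u (Finset.mem_insert_of_mem hu) w (Finset.mem_insert_of_mem hw),
      fun u hu => h u (Finset.mem_insert_of_mem hu) m (Finset.mem_insert_self m I)⟩
  · rintro ⟨h1, h2⟩ u hu w hw hadj
    rcases Finset.mem_insert.mp hu with hu' | hu' <;>
      rcases Finset.mem_insert.mp hw with hw' | hw'
    · subst hu'; subst hw'; exact G.irrefl hadj
    · subst hu'; exact h2 w hw' hadj.symm
    · subst hw'; exact h2 u hu' hadj
    · exact h1 u hu' w hw' hadj

lemma B_insert (G : SimpleGraph V) (p : V → ℝ) {m : V} {S : Finset V} (hm : m ∉ S) :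
    Bfun G p (insert m S)
      = Bfun G p S - p m * Bfun G p (S.filter (fun u => ¬ G.Adj u m)) := by
  set T := S.filter (fun u => ¬ G.Adj u m) with hT
  have hTS : T.powerset ⊆ S.powerset :=
    Finset.powerset_mono.mpr (Finset.filter_subset _ _)
  rw [B_eq_sum_ite, Finset.sum_powerset_insert hm, ← B_eq_sum_ite, sub_eq_add_neg]
  congr 1
  calc ∑ I ∈ S.powerset,
        (if IndepSet G (insert m I) then
          (-1:ℝ)^(insert m I).card * ∏ v ∈ insert m I, p v else 0)
      = ∑ I ∈ S.powerset,
        (if IndepSet G I ∧ I ⊆ T then -(p m * ((-1:ℝ)^I.card * ∏ v ∈ I, p v)) else 0) := by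
        refine Finset.sum_congr rfl fun I hI => ?_
        have hIS : I ⊆ S := Finset.mem_powerset.mp hI
        have hmI : m ∉ I := fun h => hm (hIS h)
        have hcond : IndepSet G (insert m I) ↔ (IndepSet G I ∧ I ⊆ T) := by
          rw [indep_insert_iff G hmI]
          constructor
          · rintro ⟨h1, h2⟩
            exact ⟨h1, fun u hu => Finset.mem_filter.mpr ⟨hIS hu, h2 u hu⟩⟩
          · rintro ⟨h1, h2⟩
            exact ⟨h1, fun u hu => (Finset.mem_filter.mp (h2 hu)).2⟩
        rw [if_congr hcond rfl rfl]
        split_ifs with h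
        · rw [Finset.card_insert_of_notMem hmI, Finset.prod_insert hmI, pow_succ]
          ring
        · rfl
    _ = ∑ I ∈ T.powerset,
        (if IndepSet G I ∧ I ⊆ T then -(p m * ((-1:ℝ)^I.card * ∏ v ∈ I, p v)) else 0) := by
        refine (Finset.sum_subset hTS fun I hI hIT => ?_).symm
        rw [if_neg]
        rintro ⟨-, h2⟩
        exact hIT (Finset.mem_powerset.mpr h2)
    _ = -(p m * Bfun G p T) := by
        rw [B_eq_sum_ite, Finset.mul_sum, ← Finset.sum_neg_distrib]
        refine Finset.sum_congr rfl fun I hI => ?_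
        have : I ⊆ T := Finset.mem_powerset.mp hI
        split_ifs with h1 h2 h2 <;> simp_all

lemma B_union (G : SimpleGraph V) (p : V → ℝ) (T : Finset V) :
    ∀ S : Finset V, Disjoint S T → (∀ u ∈ S, ∀ w ∈ T, ¬ G.Adj u w) →
      Bfun G p (S ∪ T) = Bfun G p S * Bfun G p T := by
  induction T using Finset.strongInduction with
  | _ T ihT =>
    intro S hdisj hedge
    rcases T.eq_empty_or_nonempty with rfl | ⟨m, hmT⟩
    · simp [B_empty]
    set T' := T.erase m with hT'def
    have hmT' : m ∉ T' := Finset.notMem_erase m T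
    have hins : insert m T' = T := Finset.insert_erase hmT
    have hssub : T' ⊂ T := Finset.erase_ssubset hmT
    have hT'T : T' ⊆ T := Finset.erase_subset m T
    set Tf := T'.filter (fun u => ¬ G.Adj u m) with hTfdef
    have hTfT : Tf ⊂ T := lt_of_le_of_lt (Finset.filter_subset _ _) hssub
    have hmS : m ∉ S := fun h => Finset.disjoint_left.mp hdisj h hmT
    have hm' : m ∉ S ∪ T' := by simp [hmS, hmT']
    have hstep : S ∪ T = insert m (S ∪ T') := by
      rw [← hins, Finset.union_insert]
    have hdisj' : Disjoint S T' := hdisj.mono_right hT'T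
    have hedge' : ∀ u ∈ S, ∀ w ∈ T', ¬ G.Adj u w :=
      fun u hu w hw => hedge u hu w (hT'T hw)
    have hfil : (S ∪ T').filter (fun u => ¬ G.Adj u m) = S ∪ Tf := by
      rw [Finset.filter_union]
      congr 1
      rw [Finset.filter_eq_self]
      exact fun u hu => hedge u hu m hmT
    have hdisjf : Disjoint S Tf := hdisj'.mono_right (Finset.filter_subset _ _)
    have hedgef : ∀ u ∈ S, ∀ w ∈ Tf, ¬ G.Adj u w :=
      fun u hu w hw => hedge' u hu w (Finset.filter_subset _ _ hw)
    rw [hstep, B_insert G p hm', hfil, ihT T' hssub S hdisj' hedge',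
      ihT Tf hTfT S hdisjf hedgef, ← hins, B_insert G p hmT']
    ring

lemma main_lemma (G : SimpleGraph V) (p : V → ℝ) (hG : Lefthanded G)
    (hB : ∀ S : Finset V, 0 < Bfun G p S) :
    ∀ S : Finset V, DownClosed S →
      ∏ v ∈ S, (1 - p v * Bfun G p (Fset G v) / Bfun G p (Dset v)) = Bfun G p S := by
  intro S
  induction S using Finset.strongInduction with
  | _ S ih =>
    intro hS
    rcases S.eq_empty_or_nonempty with rfl | hne
    · simp [B_empty]
    obtain ⟨m, hmS, hmax⟩ : ∃ m ∈ S, ∀ x ∈ S, ¬ m < x := by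
      obtain ⟨m, hm⟩ := S.exists_maximal hne
      exact ⟨m, hm.1, fun x hx h => lt_irrefl m (lt_of_lt_of_le h (hm.2 hx h.le))⟩
    set S' := S.erase m with hS'def
    have hmS' : m ∉ S' := Finset.notMem_erase m S
    have hins : insert m S' = S := Finset.insert_erase hmS
    have hsub : S' ⊂ S := Finset.erase_ssubset hmS
    have hS'sub : S' ⊆ S := Finset.erase_subset m S
    have hDC' : DownClosed S' := by
      intro s hs u hu
      have hu' : u ∈ S := hS s (hS'sub hs) hu
      refine Finset.mem_erase.mpr ⟨?_, hu'⟩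
      rintro rfl
      exact hmax s (hS'sub hs) (Finset.mem_filter.mp hu).2
    have hDsub : Dset m ⊆ S' := by
      intro u hu
      have hlt : u < m := (Finset.mem_filter.mp hu).2
      exact Finset.mem_erase.mpr ⟨ne_of_lt hlt, hS m hmS hu⟩
    set R := S' \ Dset m with hRdef
    have hRS' : R ⊆ S' := Finset.sdiff_subset
    -- no edges between Dset m and R
    have hnoedge : ∀ u ∈ Dset m, ∀ w ∈ R, ¬ G.Adj u w := by
      intro u hu w hw hadj
      have hum : u < m := (Finset.mem_filter.mp hu).2
      have hwS' : w ∈ S' := (Finset.mem_sdiff.mp hw).1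
      have hwD : w ∉ Dset m := (Finset.mem_sdiff.mp hw).2
      have hwm : ¬ w < m := fun h =>
        hwD (Finset.mem_filter.mpr ⟨Finset.mem_univ w, h⟩)
      have hwne : w ≠ m := (Finset.mem_erase.mp hwS').1
      rcases hG.2.1 u w hadj with h | h
      · have huw : u < w := lt_of_le_of_ne h (fun h' => G.irrefl (h' ▸ hadj))
        rcases hG.1 u w m huw hum with h' | h'
        · exact hwm (lt_of_le_of_ne h' hwne)
        · exact hmax w (hS'sub hwS') (lt_of_le_of_ne h' (Ne.symm hwne))
      · exact hwm (lt_of_le_of_lt h hum)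
    have hdisjDR : Disjoint (Dset m) R := by
      rw [hRdef]
      exact Finset.disjoint_sdiff
    have hS'union : Dset m ∪ R = S' := by
      rw [hRdef, Finset.union_sdiff_of_subset hDsub]
    have h1 : Bfun G p S' = Bfun G p (Dset m) * Bfun G p R := by
      rw [← hS'union]
      exact B_union G p R (Dset m) hdisjDR hnoedge
    have hFD : Fset G m ⊆ Dset m := Finset.sdiff_subset
    have hfil : S'.filter (fun u => ¬ G.Adj u m) = Fset G m ∪ R := by
      ext u
      simp only [Finset.mem_filter, Finset.mem_union, Fset, Nset, Dset, hRdef,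
        Finset.mem_sdiff, Finset.mem_filter, Finset.mem_univ, true_and]
      constructor
      · rintro ⟨huS', hna⟩
        by_cases hlt : u < m
        · exact Or.inl ⟨hlt, fun h => hna h.2⟩
        · exact Or.inr ⟨huS', hlt⟩
      · rintro (⟨hlt, hna⟩ | ⟨huS', hnlt⟩)
        · refine ⟨hDsub (by simp [Dset, hlt]), fun hadj => hna ⟨hlt, hadj⟩⟩
        · refine ⟨huS', fun hadj => ?_⟩
          have hune : u ≠ m := (Finset.mem_erase.mp huS').1
          rcases hG.2.1 u m hadj with h | h
          · exact hnlt (lt_of_le_of_ne h hune)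
          · exact hmax u (hS'sub huS') (lt_of_le_of_ne h (Ne.symm hune))
    have h2 : Bfun G p (Fset G m ∪ R) = Bfun G p (Fset G m) * Bfun G p R := by
      refine B_union G p R (Fset G m) (hdisjDR.mono_left hFD)
        (fun u hu w hw => hnoedge u (hFD hu) w hw)
    have h3 : Bfun G p S
        = Bfun G p S' - p m * (Bfun G p (Fset G m) * Bfun G p R) := by
      rw [← hins, B_insert G p hmS', hfil, h2]
    have hDne : Bfun G p (Dset m) ≠ 0 := ne_of_gt (hB _)
    conv_lhs => rw [← hins]
    rw [Finset.prod_insert hmS', ih S' hsub hDC', h3, h1]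
    field_simp

end Stmt9Aux

theorem stmt9 {V : Type*} [Fintype V] [DecidableEq V] [PartialOrder V]
    (G : SimpleGraph V) (p : V → ℝ) (hp : ∀ v, 0 ≤ p v ∧ p v ≤ 1)
    (hG : Lefthanded G) (hB : ∀ S : Finset V, 0 < Bfun G p S) :
    ∏ v : V, (1 - p v * Bfun G p (Fset G v) / Bfun G p (Dset v))
      = Bfun G p Finset.univ := by
  exact main_lemma G p hG hB Finset.univ (fun s _ u _ => Finset.mem_univ u)
end

section
/- Every graph that is lefthanded with respect to some tree order is chordal: it contains no induced cycle of length at least 4. -/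
open scoped Classical

theorem stmt14 {V : Type*} [Fintype V] [PartialOrder V] (G : SimpleGraph V)
    (hG : Lefthanded G) (n : ℕ) (hn : 4 ≤ n) (f : ZMod n ↪ V) :
    ¬ (∀ a b : ZMod n, G.Adj (f a) (f b) ↔ (a ≠ b ∧ (a - b = 1 ∨ b - a = 1))) := by
  haveI : NeZero n := ⟨by omega⟩
  intro h
  have key : ∀ k : ℕ, 0 < k → k < n → ((k : ℕ) : ZMod n) ≠ 0 := by
    intro k hk hkn he
    have hval := ZMod.val_cast_of_lt hkn
    rw [he, ZMod.val_zero] at hval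
    omega
  have h1 : (1 : ZMod n) ≠ 0 := by
    have := key 1 (by omega) (by omega); simpa using this
  have h2z : (2 : ZMod n) ≠ 0 := by
    have := key 2 (by omega) (by omega); push_cast at this; exact this
  have h3 : (3 : ZMod n) ≠ 0 := by
    have := key 3 (by omega) (by omega); push_cast at this; exact this
  obtain ⟨hT, hcomp, hLH⟩ := hG
  -- choose a minimal element of the cycle
  obtain ⟨m, hmS, hmin⟩ : ∃ m ∈ Finset.univ.image f, ∀ x ∈ Finset.univ.image f, ¬ x < m :=
    (Finset.exists_minimal (s := Finset.univ.image f)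
    ⟨f 0, Finset.mem_image_of_mem f (Finset.mem_univ 0)⟩).imp fun _ hm => ⟨hm.1, fun _ hx => hm.not_lt hx⟩
  obtain ⟨i, -, hi⟩ := Finset.mem_image.mp hmS
  subst hi
  -- neighbors on the cycle
  have hne1 : i ≠ i - 1 := by
    intro he
    apply h1
    have : i - (i - 1) = 1 := by ring
    rw [← he, sub_self] at this
    exact this.symm
  have hne2 : i + 1 ≠ i := by
    intro he
    apply h1
    have : i + 1 - i = 1 := by ring
    rw [he, sub_self] at this
    exact this.symm
  have ha : G.Adj (f i) (f (i - 1)) := by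
    rw [h]
    exact ⟨hne1, Or.inl (by ring)⟩
  have hb : G.Adj (f (i + 1)) (f i) := by
    rw [h]
    exact ⟨hne2, Or.inl (by ring)⟩
  -- f i is strictly below both neighbors
  have hlt : ∀ j : ZMod n, G.Adj (f i) (f j) → f i < f j := by
    intro j hj
    have hc := hcomp _ _ hj
    have hjS : f j ∈ Finset.univ.image f := Finset.mem_image_of_mem f (Finset.mem_univ j)
    have hne : f i ≠ f j := hj.ne
    rcases hc with hc | hc
    · exact lt_of_le_of_ne hc hne
    · exact absurd (lt_of_le_of_ne hc hne.symm) (hmin _ hjS)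
  have hlta : f i < f (i - 1) := hlt _ ha
  have hltb : f i < f (i + 1) := hlt _ hb.symm
  -- the two neighbors are comparable and distinct
  have hneab : f (i - 1) ≠ f (i + 1) := by
    intro he
    have : (i - 1 : ZMod n) = i + 1 := f.injective he
    apply h2z
    have h2 : (i + 1) - (i - 1) = 2 := by ring
    rw [← this, sub_self] at h2
    exact h2.symm
  -- the chord
  have hchord : G.Adj (f (i + 1)) (f (i - 1)) := by
    rcases hT _ _ _ hlta hltb with hle | hle
    · -- f (i-1) ≤ f (i+1)
      have hltab : f (i - 1) < f (i + 1) := lt_of_le_of_ne hle hneab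
      exact hLH _ _ _ hlta hltab (hb.symm).symm
    · have hltab : f (i + 1) < f (i - 1) := lt_of_le_of_ne hle hneab.symm
      exact ((hLH _ _ _ hltb hltab ha.symm)).symm
  rw [h] at hchord
  rcases hchord.2 with he | he
  · apply h1
    have : (i + 1) - (i - 1) = 2 := by ring
    rw [this] at he
    have : (2 : ZMod n) - 1 = 1 := by norm_num
    rw [he] at this
    simpa [eq_comm] using this
  · apply h3
    have h2 : (i - 1) - (i + 1) = -2 := by ring
    rw [h2] at he
    have : (3 : ZMod n) = -(-2) + 1 := by ring
    rw [this, he]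
    ring
end
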